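/- Consider exponential weights (Hedge) on K ≥ 2 experts over M rounds: given loss vectors ℓ_1,…,ℓ_M ∈ ℝ^K with ‖ℓ_t‖_∞ ≤ c_t and a constant β > 0 with c_t ≤ β for all t, define the probability vectors p_t ∈ Δ_K by p_t^{(k)} = exp(−(√(ln K)/(β√t)) Σ_{s=1}^{t−1} ℓ_s^{(k)}) / Σ_{k'} exp(−(√(ln K)/(β√t)) Σ_{s=1}^{t−1} ℓ_s^{(k')}). Then for every expert k ∈ {1,…,K}: Σ_{t=1}^M ⟨ℓ_t, p_t⟩ − Σ_{t=1}^M ℓ_t^{(k)} ≤ 2 β √(M ln K). -/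

import Mathlib

section HedgeAux

open Real Finset

private lemma hoeff2 (a : ℝ) (ha : |a| ≤ 1) (y : ℝ) (hy : 0 ≤ y) :
    (1 - a) / 2 * Real.exp y + (1 + a) / 2 * Real.exp (-y)
      ≤ Real.exp (-(a * y) + y ^ 2 / 2) := by
  obtain ⟨ha1, ha2⟩ := abs_le.mp ha
  set f : ℝ → ℝ := fun y => (1 - a) / 2 * Real.exp y + (1 + a) / 2 * Real.exp (-y) with hf
  set f' : ℝ → ℝ := fun y => (1 - a) / 2 * Real.exp y - (1 + a) / 2 * Real.exp (-y) with hf'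
  have hfpos : ∀ x, 0 < f x := by
    intro x
    have h1 : 0 ≤ (1 - a) / 2 := by linarith
    have h2 : 0 ≤ (1 + a) / 2 := by linarith
    have hm : 0 < min (Real.exp x) (Real.exp (-x)) := lt_min (exp_pos _) (exp_pos _)
    have e1 := min_le_left (Real.exp x) (Real.exp (-x))
    have e2 := min_le_right (Real.exp x) (Real.exp (-x))
    have := mul_le_mul_of_nonneg_left e1 h1
    have := mul_le_mul_of_nonneg_left e2 h2
    simp only [hf]
    nlinarith
  have hexpneg : ∀ x : ℝ, HasDerivAt (fun z : ℝ => Real.exp (-z)) (-Real.exp (-x)) x := by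
    intro x
    have := (Real.hasDerivAt_exp (-x)).comp x (hasDerivAt_neg x)
    simpa [Function.comp_def] using this
  have hfd : ∀ x, HasDerivAt f (f' x) x := by
    intro x
    have h1 := (Real.hasDerivAt_exp x).const_mul ((1 - a) / 2)
    have h2 := (hexpneg x).const_mul ((1 + a) / 2)
    have := h1.add h2
    simpa [hf, hf', mul_comm, sub_eq_add_neg, mul_neg, Pi.add_def] using this
  have hf'd : ∀ x, HasDerivAt f' (f x) x := by
    intro x
    have h1 := (Real.hasDerivAt_exp x).const_mul ((1 - a) / 2)
    have h2 := (hexpneg x).const_mul ((1 + a) / 2)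
    have := h1.sub h2
    simpa [hf, hf', mul_neg, sub_neg_eq_add, Pi.sub_def] using this
  set H : ℝ → ℝ := fun x => -a + x - f' x / f x with hH
  have hHd : ∀ x, HasDerivAt H (1 - (f x * f x - f' x * f' x) / (f x) ^ 2) x := by
    intro x
    have hdiv := (hf'd x).div (hfd x) (hfpos x).ne'
    have hlin : HasDerivAt (fun z : ℝ => -a + z) 1 x := by
      simpa using (hasDerivAt_id x).const_add (-a)
    exact hlin.sub hdiv
  have hHmono : Monotone H := by
    apply monotone_of_hasDerivAt_nonneg hHd
    rw [Pi.le_def]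
    intro x
    simp only [Pi.zero_apply]
    have h2 : (0:ℝ) < (f x) ^ 2 := pow_pos (hfpos x) 2
    have : (f x * f x - f' x * f' x) / (f x) ^ 2 ≤ 1 := by
      rw [div_le_one h2]; nlinarith [sq_nonneg (f' x)]
    linarith
  have hf0 : f 0 = 1 := by simp only [hf]; simp [Real.exp_zero]; ring
  have hf'0 : f' 0 = -a := by simp only [hf']; simp [Real.exp_zero]; ring
  have hH0 : H 0 = 0 := by
    simp only [hH, hf0, hf'0]
    norm_num
  have hlog : ∀ x, HasDerivAt (fun z => Real.log (f z)) (f' x / f x) x :=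
    fun x => (hfd x).log (hfpos x).ne'
  set h : ℝ → ℝ := fun x => -(a * x) + x ^ 2 / 2 - Real.log (f x) with hh
  have hhd : ∀ x, HasDerivAt h (H x) x := by
    intro x
    have h1 : HasDerivAt (fun z : ℝ => -(a * z) + z ^ 2 / 2) (-a + x) x := by
      have ha' : HasDerivAt (fun z : ℝ => -(a * z)) (-a) x := by
        simpa [Pi.neg_def] using ((hasDerivAt_id x).const_mul a).neg
      have hb : HasDerivAt (fun z : ℝ => z ^ 2 / 2) x x := by
        have := (hasDerivAt_pow 2 x).div_const 2
        simpa using this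
      simpa [Pi.add_def] using ha'.add hb
    simpa [hH, Pi.sub_def] using h1.sub (hlog x)
  have hhmono : MonotoneOn h (Set.Ici 0) := by
    apply monotoneOn_of_hasDerivWithinAt_nonneg (convex_Ici 0)
      (fun x _ => (hhd x).continuousAt.continuousWithinAt)
      (fun x _ => (hhd x).hasDerivWithinAt)
    intro x hx
    rw [interior_Ici] at hx
    have := hHmono (le_of_lt hx)
    rw [hH0] at this
    exact this
  have key : 0 ≤ h y := by
    have h0 : h 0 = 0 := by
      simp only [hh]
      rw [hf0]
      norm_num
    have := hhmono (Set.self_mem_Ici) (Set.mem_Ici.mpr hy) hy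
    rw [h0] at this
    exact this
  have : Real.log (f y) ≤ -(a * y) + y ^ 2 / 2 := by simp only [hh] at key; linarith
  calc f y = Real.exp (Real.log (f y)) := (Real.exp_log (hfpos y)).symm
    _ ≤ Real.exp (-(a * y) + y ^ 2 / 2) := Real.exp_le_exp.mpr this

private lemma hoeff_sum {K : ℕ} (q x : Fin K → ℝ) (cc η : ℝ) (hη : 0 ≤ η) (hcc : 0 ≤ cc)
    (hq0 : ∀ j, 0 ≤ q j) (hq1 : ∑ j, q j = 1) (hx : ∀ j, |x j| ≤ cc) :
    ∑ j, q j * Real.exp (-η * x j)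
      ≤ Real.exp (-η * (∑ j, q j * x j) + η ^ 2 * cc ^ 2 / 2) := by
  rcases eq_or_lt_of_le hcc with hcc0 | hccpos
  · -- cc = 0 : all x j = 0
    have hx0 : ∀ j, x j = 0 := fun j => abs_eq_zero.mp (le_antisymm (hcc0 ▸ hx j) (abs_nonneg _))
    simp [hx0, hq1, ← hcc0]
  · set μ := ∑ j, q j * x j with hμ
    have hμle : |μ| ≤ cc := by
      calc |μ| ≤ ∑ j, |q j * x j| := Finset.abs_sum_le_sum_abs _ _
        _ ≤ ∑ j, q j * cc := by
            apply Finset.sum_le_sum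
            intro j _
            rw [abs_mul, abs_of_nonneg (hq0 j)]
            exact mul_le_mul_of_nonneg_left (hx j) (hq0 j)
        _ = cc := by rw [← Finset.sum_mul, hq1, one_mul]
    set a := μ / cc with ha
    have haabs : |a| ≤ 1 := by
      rw [ha, abs_div, abs_of_pos hccpos, div_le_one hccpos]
      exact hμle
    have chord : ∀ j, Real.exp (-η * x j)
        ≤ (cc - x j) / (2 * cc) * Real.exp (η * cc)
          + (cc + x j) / (2 * cc) * Real.exp (-(η * cc)) := by
      intro j
      obtain ⟨hl, hr⟩ := abs_le.mp (hx j)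
      have hl1 : 0 ≤ (cc - x j) / (2 * cc) := div_nonneg (by linarith) (by linarith)
      have hl2 : 0 ≤ (cc + x j) / (2 * cc) := by
        apply div_nonneg (by linarith) (by linarith)
      have hsum : (cc - x j) / (2 * cc) + (cc + x j) / (2 * cc) = 1 := by
        field_simp
        ring
      have := convexOn_exp.2 (Set.mem_univ (η * cc)) (Set.mem_univ (-(η * cc)))
        hl1 hl2 hsum
      rw [smul_eq_mul, smul_eq_mul, smul_eq_mul, smul_eq_mul] at this
      have harg : (cc - x j) / (2 * cc) * (η * cc) + (cc + x j) / (2 * cc) * (-(η * cc))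
          = -η * x j := by
        field_simp
        ring
      rw [harg] at this
      exact this
    calc ∑ j, q j * Real.exp (-η * x j)
        ≤ ∑ j, q j * ((cc - x j) / (2 * cc) * Real.exp (η * cc)
            + (cc + x j) / (2 * cc) * Real.exp (-(η * cc))) := by
          apply Finset.sum_le_sum
          intro j _
          exact mul_le_mul_of_nonneg_left (chord j) (hq0 j)
      _ = (1 - a) / 2 * Real.exp (η * cc) + (1 + a) / 2 * Real.exp (-(η * cc)) := by
          rw [show ∑ j, q j * ((cc - x j) / (2 * cc) * Real.exp (η * cc)
            + (cc + x j) / (2 * cc) * Real.exp (-(η * cc)))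
            = ∑ j, ((Real.exp (η * cc) / (2 * cc)) * (q j * cc - q j * x j)
              + (Real.exp (-(η * cc)) / (2 * cc)) * (q j * cc + q j * x j)) from
            Finset.sum_congr rfl fun j _ => by field_simp]
          rw [Finset.sum_add_distrib, ← Finset.mul_sum, ← Finset.mul_sum]
          rw [Finset.sum_sub_distrib, Finset.sum_add_distrib, ← Finset.sum_mul, hq1, one_mul]
          rw [ha]
          field_simp
          ring
      _ ≤ Real.exp (-(a * (η * cc)) + (η * cc) ^ 2 / 2) :=
          hoeff2 a haabs (η * cc) (by positivity)
      _ = Real.exp (-η * μ + η ^ 2 * cc ^ 2 / 2) := by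
          congr 1
          rw [ha]
          field_simp

private lemma mono_mix {K : ℕ} (hK : 0 < K) (L : Fin K → ℝ) {η η' : ℝ}
    (h0 : 0 < η) (h : η ≤ η') :
    Real.log ((∑ j, Real.exp (-η * L j)) / K) / η
      ≤ Real.log ((∑ j, Real.exp (-η' * L j)) / K) / η' := by
  have hη' : 0 < η' := lt_of_lt_of_le h0 h
  have hKpos : (0:ℝ) < K := by exact_mod_cast hK
  have hne : Nonempty (Fin K) := Fin.pos_iff_nonempty.mp hK
  set A := (∑ j, Real.exp (-η * L j)) / K with hA
  set B := (∑ j, Real.exp (-η' * L j)) / K with hB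
  have hApos : 0 < A :=
    div_pos (Finset.sum_pos (fun j _ => Real.exp_pos _) Finset.univ_nonempty) hKpos
  have hBpos : 0 < B :=
    div_pos (Finset.sum_pos (fun j _ => Real.exp_pos _) Finset.univ_nonempty) hKpos
  set p := η' / η with hpdef
  have hp : 1 ≤ p := (one_le_div h0).mpr h
  have key : A ^ p ≤ B := by
    have hmean := Real.rpow_arith_mean_le_arith_mean_rpow Finset.univ
      (fun _ : Fin K => (K:ℝ)⁻¹) (fun j => Real.exp (-η * L j))
      (fun j _ => by positivity)
      (by simp [Finset.card_univ]; field_simp)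
      (fun j _ => (Real.exp_pos _).le) hp
    calc A ^ p = (∑ j, (K:ℝ)⁻¹ * Real.exp (-η * L j)) ^ p := by
          rw [hA, div_eq_inv_mul, Finset.mul_sum]
      _ ≤ ∑ j, (K:ℝ)⁻¹ * Real.exp (-η * L j) ^ p := hmean
      _ = B := by
          rw [hB, div_eq_inv_mul, Finset.mul_sum]
          apply Finset.sum_congr rfl
          intro j _
          congr 1
          rw [← Real.exp_mul]
          congr 1
          have hinv : η * η⁻¹ = 1 := mul_inv_cancel₀ h0.ne'
          rw [hpdef, div_eq_mul_inv]
          linear_combination (-(L j) * η') * hinv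
  have hlog : p * Real.log A ≤ Real.log B := by
    rw [← Real.log_rpow hApos]
    exact Real.log_le_log (Real.rpow_pos_of_pos hApos p) key
  rw [div_le_div_iff₀ h0 hη']
  have hstep := mul_le_mul_of_nonneg_right hlog h0.le
  have hpη : p * η = η' := by rw [hpdef]; exact div_mul_cancel₀ η' h0.ne'
  have h2 : Real.log A * η' = p * Real.log A * η := by rw [← hpη]; ring
  linarith

private lemma sum_inv_sqrt (M : ℕ) :
    ∑ n ∈ Finset.range M, 1 / Real.sqrt (n + 1) ≤ 2 * Real.sqrt M := by
  induction M with
  | zero => simp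
  | succ m ih =>
    rw [Finset.sum_range_succ]
    have h1 : 0 < Real.sqrt ((m:ℝ) + 1) := Real.sqrt_pos.mpr (by positivity)
    have h2 : Real.sqrt ((m:ℝ) + 1) ^ 2 = (m:ℝ) + 1 := Real.sq_sqrt (by positivity)
    have h3 : Real.sqrt (m:ℝ) ^ 2 = (m:ℝ) := Real.sq_sqrt (by positivity)
    have key : Real.sqrt (m:ℝ) * Real.sqrt ((m:ℝ) + 1) ≤ (m:ℝ) + 1/2 := by
      rw [← Real.sqrt_mul (by positivity)]
      calc Real.sqrt ((m:ℝ) * ((m:ℝ) + 1)) ≤ Real.sqrt (((m:ℝ) + 1/2)^2) := by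
            apply Real.sqrt_le_sqrt
            nlinarith
        _ = (m:ℝ) + 1/2 := Real.sqrt_sq (by positivity)
    have step : 1 / Real.sqrt ((m:ℝ) + 1) ≤ 2 * Real.sqrt ((m:ℝ) + 1) - 2 * Real.sqrt (m:ℝ) := by
      rw [div_le_iff₀ h1]
      nlinarith
    push_cast
    push_cast at ih
    linarith

end HedgeAux

/-- Regret bound for exponential weights (Hedge) on `K ≥ 2` experts over `M` rounds,
with time-varying learning rate `√(ln K)/(β √t)` (round `t` is `(t : Fin M) + 1`):
for every expert `k`, the regret is at most `2 β √(M ln K)`. -/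
theorem stmt_3 (K M : ℕ) (hK : 2 ≤ K)
    (ℓ : Fin M → Fin K → ℝ) (c : Fin M → ℝ) (β : ℝ) (hβ : 0 < β)
    (hc : ∀ t k, |ℓ t k| ≤ c t) (hcβ : ∀ t, c t ≤ β)
    (p : Fin M → Fin K → ℝ)
    (hp : ∀ t k, p t k =
      Real.exp (-(Real.sqrt (Real.log K) / (β * Real.sqrt ((t : ℕ) + 1))) *
          ∑ s ∈ Finset.univ.filter (fun s : Fin M => s < t), ℓ s k) /
        ∑ k' : Fin K,
          Real.exp (-(Real.sqrt (Real.log K) / (β * Real.sqrt ((t : ℕ) + 1))) *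
            ∑ s ∈ Finset.univ.filter (fun s : Fin M => s < t), ℓ s k')) :
    ∀ k : Fin K,
      ∑ t : Fin M, (∑ k' : Fin K, ℓ t k' * p t k') - ∑ t : Fin M, ℓ t k
        ≤ 2 * β * Real.sqrt (M * Real.log K) := by
  intro k
  have hK0 : 0 < K := by omega
  have hne : Nonempty (Fin K) := Fin.pos_iff_nonempty.mp hK0
  have hK1 : (1:ℝ) < K := by exact_mod_cast hK
  have hKne : (K:ℝ) ≠ 0 := by positivity
  have hlk : 0 < Real.log K := Real.log_pos hK1
  obtain rfl | hM0 := Nat.eq_zero_or_pos M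
  · simp
  set lk := Real.log K with hlkdef
  set ℓ' : ℕ → Fin K → ℝ := fun n j => if h : n < M then ℓ ⟨n, h⟩ j else 0 with hℓ'def
  set D : ℕ → Fin K → ℝ := fun n j => ∑ s ∈ Finset.range n, ℓ' s j with hDdef
  set η : ℕ → ℝ := fun n => Real.sqrt lk / (β * Real.sqrt ((n:ℝ) + 1)) with hηdef
  have hηpos : ∀ n, 0 < η n := by
    intro n
    apply div_pos (Real.sqrt_pos.mpr hlk)
    exact mul_pos hβ (Real.sqrt_pos.mpr (by positivity))
  have hηanti : ∀ n, η n ≤ η (n - 1) := by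
    intro n
    simp only [hηdef]
    apply div_le_div_of_nonneg_left (Real.sqrt_nonneg _)
      (mul_pos hβ (Real.sqrt_pos.mpr (by positivity)))
    apply mul_le_mul_of_nonneg_left _ hβ.le
    apply Real.sqrt_le_sqrt
    have : ((n - 1 : ℕ):ℝ) ≤ (n:ℝ) := by exact_mod_cast Nat.sub_le n 1
    linarith
  set S : ℕ → ℕ → ℝ := fun r n => ∑ j, Real.exp (-η r * D n j) with hSdef
  have hSpos : ∀ r n, 0 < S r n :=
    fun r n => Finset.sum_pos (fun j _ => Real.exp_pos _) Finset.univ_nonempty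
  set Φ : ℕ → ℝ := fun n => -(Real.log (S (n - 1) n / K)) / η (n - 1) with hΦdef
  have hS0 : ∀ r, S r 0 = K := by
    intro r; simp [hSdef, hDdef, Finset.card_univ]
  have hΦ0 : Φ 0 = 0 := by
    have h1 : S 0 0 / (K:ℝ) = 1 := by rw [hS0]; field_simp
    simp [hΦdef, h1]
  -- filter sum conversion
  have hfin : ∀ (t : Fin M) (f : Fin M → ℝ),
      ∑ s ∈ Finset.univ.filter (fun s : Fin M => s < t), f s
        = ∑ n ∈ Finset.range (t:ℕ), (if h : n < M then f ⟨n, h⟩ else 0) := by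
    intro t f
    rw [Finset.sum_filter]
    have h1 : ∑ s : Fin M, (if s < t then f s else 0)
        = ∑ n ∈ Finset.range M,
            (if h : n < M then (if n < (t:ℕ) then f ⟨n, h⟩ else 0) else 0) := by
      rw [← Fin.sum_univ_eq_sum_range
        (fun n => if h : n < M then (if n < (t:ℕ) then f ⟨n, h⟩ else 0) else 0) M]
      apply Finset.sum_congr rfl
      intro s _
      rw [dif_pos s.isLt]
      simp only [Fin.eta]
      by_cases hst : s < t
      · rw [if_pos hst, if_pos (Fin.lt_def.mp hst)]
      · rw [if_neg hst, if_neg (fun h => hst (Fin.lt_def.mpr h))]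
    rw [h1]
    rw [← Finset.sum_subset (Finset.range_subset_range.mpr (le_of_lt t.isLt))]
    · apply Finset.sum_congr rfl
      intro n hn
      rw [Finset.mem_range] at hn
      rcases Nat.lt_or_ge n M with h | h
      · rw [dif_pos h, dif_pos h, if_pos hn]
      · rw [dif_neg (by omega), dif_neg (by omega)]
    · intro n hn hnt
      rw [Finset.mem_range] at hn
      rw [Finset.mem_range] at hnt
      rw [dif_pos hn, if_neg hnt]
  have hpt : ∀ (t : Fin M) (j : Fin K),
      p t j = Real.exp (-η (t:ℕ) * D (t:ℕ) j) / S (t:ℕ) (t:ℕ) := by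
    intro t j
    have hnum : ∀ j' : Fin K,
        (∑ s ∈ Finset.univ.filter (fun s : Fin M => s < t), ℓ s j') = D (t:ℕ) j' := by
      intro j'
      rw [hfin t (fun s => ℓ s j')]
    rw [hp t j]
    simp only [hnum]
    rfl
  have hq0 : ∀ (t : Fin M) j, 0 ≤ p t j := by
    intro t j; rw [hpt t j]; positivity
  have hq1 : ∀ t : Fin M, ∑ j, p t j = 1 := by
    intro t
    rw [Finset.sum_congr rfl (fun j _ => hpt t j), ← Finset.sum_div]
    exact div_self (hSpos _ _).ne'
  -- per-round bound
  have main : ∀ t : Fin M,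
      ∑ k' : Fin K, ℓ t k' * p t k'
        ≤ (Φ ((t:ℕ)+1) - Φ (t:ℕ)) + η (t:ℕ) * β ^ 2 / 2 := by
    intro t
    set n := (t:ℕ) with hn
    have hnM : n < M := t.isLt
    have hc0 : 0 ≤ c t := le_trans (abs_nonneg _) (hc t k)
    have hℓeq : ∀ j, ℓ' n j = ℓ t j := by
      intro j
      simp only [hℓ'def]
      rw [dif_pos hnM]
    have hDsucc : ∀ j, D (n+1) j = D n j + ℓ t j := by
      intro j
      simp only [hDdef]
      rw [Finset.sum_range_succ]
      rw [hℓeq j]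
    have hhoef := hoeff_sum (fun j => p t j) (fun j => ℓ t j) (c t) (η n)
      (hηpos n).le hc0 (fun j => hq0 t j) (hq1 t) (fun j => hc t j)
    have hratio : ∑ j, p t j * Real.exp (-η n * ℓ t j) = S n (n+1) / S n n := by
      have hterm : ∀ j, p t j * Real.exp (-η n * ℓ t j)
          = Real.exp (-η n * D (n+1) j) / S n n := by
        intro j
        rw [hpt t j, hDsucc j, mul_add, Real.exp_add]
        ring
      rw [Finset.sum_congr rfl (fun j _ => hterm j), ← Finset.sum_div]
    have hpos : 0 < ∑ j, p t j * Real.exp (-η n * ℓ t j) := by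
      rw [hratio]; exact div_pos (hSpos _ _) (hSpos _ _)
    have hlogle : Real.log (S n (n+1) / S n n)
        ≤ -η n * (∑ j, p t j * ℓ t j) + (η n) ^ 2 * (c t) ^ 2 / 2 := by
      calc Real.log (S n (n+1) / S n n)
          = Real.log (∑ j, p t j * Real.exp (-η n * ℓ t j)) := by rw [hratio]
        _ ≤ Real.log (Real.exp (-η n * (∑ j, p t j * ℓ t j)
              + (η n) ^ 2 * (c t) ^ 2 / 2)) := Real.log_le_log hpos hhoef
        _ = _ := Real.log_exp _
    have hstep1 : ∑ k' : Fin K, ℓ t k' * p t k'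
        ≤ -(Real.log (S n (n+1) / S n n)) / η n + η n * β ^ 2 / 2 := by
      have hμeq : ∑ k' : Fin K, ℓ t k' * p t k' = ∑ j, p t j * ℓ t j :=
        Finset.sum_congr rfl (fun j _ => mul_comm _ _)
      have hc2 : (c t) ^ 2 ≤ β ^ 2 := by nlinarith [hcβ t, hc0]
      have h2 : (∑ j, p t j * ℓ t j)
          ≤ (-(Real.log (S n (n+1) / S n n)) + (η n) ^ 2 * (c t) ^ 2 / 2) / η n := by
        rw [le_div_iff₀ (hηpos n)]
        nlinarith [hlogle]
      have h3 : (-(Real.log (S n (n+1) / S n n)) + (η n) ^ 2 * (c t) ^ 2 / 2) / η n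
          = -(Real.log (S n (n+1) / S n n)) / η n + η n * (c t) ^ 2 / 2 := by
        field_simp
      have h4 : η n * (c t) ^ 2 / 2 ≤ η n * β ^ 2 / 2 := by
        have := mul_le_mul_of_nonneg_left hc2 (hηpos n).le
        linarith
      rw [hμeq]
      linarith [h2, h3.le, h3.ge, h4]
    have hstep2 : -(Real.log (S n (n+1) / S n n)) / η n ≤ Φ (n+1) - Φ n := by
      have hBn : Real.log (S n n / K) / η n
          ≤ Real.log (S (n-1) n / K) / η (n-1) :=
        mono_mix hK0 (D n) (hηpos n) (hηanti n)
      have hlogdiv : Real.log (S n (n+1) / S n n)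
          = Real.log (S n (n+1) / K) - Real.log (S n n / K) := by
        rw [Real.log_div (hSpos _ _).ne' (hSpos _ _).ne',
          Real.log_div (hSpos _ _).ne' hKne, Real.log_div (hSpos _ _).ne' hKne]
        ring
      have hΦn1 : Φ (n+1) = -(Real.log (S n (n+1) / K)) / η n := by
        simp only [hΦdef, Nat.add_sub_cancel]
      have hΦn : Φ n = -(Real.log (S (n-1) n / K)) / η (n-1) := rfl
      rw [hlogdiv, hΦn1, hΦn]
      have e1 : -(Real.log (S n (n+1) / K) - Real.log (S n n / K)) / η n
          = -(Real.log (S n (n+1) / K)) / η n + Real.log (S n n / K) / η n := by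
        ring
      rw [e1]
      have e2 : -(Real.log (S n (n+1) / K)) / η n - -(Real.log (S (n-1) n / K)) / η (n-1)
          = -(Real.log (S n (n+1) / K)) / η n + Real.log (S (n-1) n / K) / η (n-1) := by
        ring
      rw [e2]
      linarith [hBn]
    linarith [hstep1, hstep2]
  -- assemble
  have hsummain : ∑ t : Fin M, (∑ k' : Fin K, ℓ t k' * p t k')
      ≤ ∑ t : Fin M, ((Φ ((t:ℕ)+1) - Φ (t:ℕ)) + η (t:ℕ) * β ^ 2 / 2) :=
    Finset.sum_le_sum (fun t _ => main t)
  have hRHS : ∑ t : Fin M, ((Φ ((t:ℕ)+1) - Φ (t:ℕ)) + η (t:ℕ) * β ^ 2 / 2)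
      = (Φ M - Φ 0) + ∑ n ∈ Finset.range M, η n * β ^ 2 / 2 := by
    calc ∑ t : Fin M, ((Φ ((t:ℕ)+1) - Φ (t:ℕ)) + η (t:ℕ) * β ^ 2 / 2)
        = ∑ n ∈ Finset.range M, ((Φ (n+1) - Φ n) + η n * β ^ 2 / 2) :=
          Fin.sum_univ_eq_sum_range (fun n => (Φ (n+1) - Φ n) + η n * β ^ 2 / 2) M
      _ = (Φ M - Φ 0) + ∑ n ∈ Finset.range M, η n * β ^ 2 / 2 := by
          rw [Finset.sum_add_distrib, Finset.sum_range_sub Φ M]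
  have hMsub : M - 1 + 1 = M := Nat.succ_pred_eq_of_pos hM0
  have hMsubR : ((M - 1 : ℕ):ℝ) + 1 = (M:ℝ) := by exact_mod_cast congrArg Nat.cast hMsub
  have hΦM : Φ M ≤ D M k + lk / η (M-1) := by
    have hsingle : Real.exp (-η (M-1) * D M k) ≤ S (M-1) M :=
      Finset.single_le_sum (f := fun j => Real.exp (-η (M-1) * D M j))
        (fun j _ => (Real.exp_pos _).le) (Finset.mem_univ k)
    have hKpos : (0:ℝ) < K := by positivity
    have hlog2 : Real.log (Real.exp (-η (M-1) * D M k) / K) ≤ Real.log (S (M-1) M / K) :=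
      Real.log_le_log (by positivity) (by apply div_le_div_of_nonneg_right hsingle hKpos.le)
    have hlogexp : Real.log (Real.exp (-η (M-1) * D M k) / K) = -η (M-1) * D M k - lk := by
      rw [Real.log_div (Real.exp_pos _).ne' hKne, Real.log_exp]
    have h1 : -(Real.log (S (M-1) M / K)) ≤ η (M-1) * D M k + lk := by
      rw [hlogexp] at hlog2
      linarith
    have h2 : Φ M = -(Real.log (S (M-1) M / K)) / η (M-1) := rfl
    rw [h2]
    calc -(Real.log (S (M-1) M / K)) / η (M-1)
        ≤ (η (M-1) * D M k + lk) / η (M-1) :=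
          (div_le_div_iff_of_pos_right (hηpos _)).mpr h1
      _ = D M k + lk / η (M-1) := by
          rw [add_div, mul_div_cancel_left₀ _ (hηpos _).ne']
  have hlkη : lk / η (M-1) = β * Real.sqrt M * Real.sqrt lk := by
    simp only [hηdef, hMsubR]
    rw [div_div_eq_mul_div, mul_comm lk (β * Real.sqrt M), mul_div_assoc, Real.div_sqrt]
  have hsumη : ∑ n ∈ Finset.range M, η n * β ^ 2 / 2
      ≤ β * Real.sqrt M * Real.sqrt lk := by
    have hterm : ∀ n : ℕ, η n * β ^ 2 / 2
        = (β * Real.sqrt lk / 2) * (1 / Real.sqrt ((n:ℝ) + 1)) := by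
      intro n
      simp only [hηdef]
      have hs : Real.sqrt ((n:ℝ)+1) ≠ 0 := (Real.sqrt_pos.mpr (by positivity)).ne'
      field_simp
    rw [Finset.sum_congr rfl (fun n _ => hterm n), ← Finset.mul_sum]
    calc (β * Real.sqrt lk / 2) * ∑ n ∈ Finset.range M, 1 / Real.sqrt ((n:ℝ) + 1)
        ≤ (β * Real.sqrt lk / 2) * (2 * Real.sqrt M) := by
          apply mul_le_mul_of_nonneg_left (sum_inv_sqrt M) (by positivity)
      _ = β * Real.sqrt M * Real.sqrt lk := by ring
  have hDMk : D M k = ∑ t : Fin M, ℓ t k := by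
    show (∑ n ∈ Finset.range M, ℓ' n k) = _
    rw [← Fin.sum_univ_eq_sum_range (fun n => ℓ' n k) M]
    apply Finset.sum_congr rfl
    intro t _
    simp only [hℓ'def]
    rw [dif_pos t.isLt]
  have hsqrt : Real.sqrt ((M:ℝ) * lk) = Real.sqrt M * Real.sqrt lk :=
    Real.sqrt_mul (by positivity) _
  rw [hsqrt]
  linarith [hsummain, hRHS.le, hRHS.ge, hΦM, hΦ0, hsumη, hlkη.le, hlkη.ge, hDMk.le, hDMk.ge]
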